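/- For n i.i.d. samples each correct with fixed probability, the estimator 1 - C(n-c, k)/C(n, k), where c is the number of correct samples, is an unbiased estimator of pass@k = 1 - (1-p)^k; equivalently, E[C(n-c,k)]/C(n,k) = (1-p)^k when c ~ Binomial(n, p) and k ≤ n. -/

import Mathlib

lemma choose_swap (n k c : ℕ) (h : c + k ≤ n) :
    n.choose c * (n - c).choose k = n.choose k * (n - k).choose c := by
  have h1 : n.choose (c + k) * (c + k).choose c = n.choose c * (n - c).choose k := by
    simpa using Nat.choose_mul (n := n) (Nat.le_add_right c k)
  have h2 : n.choose (c + k) * (c + k).choose k = n.choose k * (n - k).choose c := by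
    have := Nat.choose_mul (n := n) (Nat.le_add_left k c)
    simpa using this
  rw [← h1, ← h2, Nat.choose_symm_add]

/-- Unbiasedness of the pass@k estimator: if `c ~ Binomial(n,p)` then
`E[C(n-c,k)]/C(n,k) = (1-p)^k`, equivalently the expectation of
`C(n-c,k)` over the binomial distribution equals `(1-p)^k · C(n,k)`. -/
theorem passk_estimator_unbiased (n k : ℕ) (hk : 1 ≤ k) (hkn : k ≤ n)
    (p : ℝ) (hp : 0 ≤ p) (hp1 : p ≤ 1) :
    ∑ c ∈ Finset.range (n + 1),
        (n.choose c : ℝ) * p ^ c * (1 - p) ^ (n - c) * ((n - c).choose k : ℝ)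
      = (1 - p) ^ k * (n.choose k : ℝ) := by
  have hsub : Finset.range (n - k + 1) ⊆ Finset.range (n + 1) :=
    Finset.range_subset_range.2 (by omega)
  rw [← Finset.sum_subset hsub (by
    intro c hc hc'
    simp only [Finset.mem_range] at hc hc'
    have : n - c < k := by omega
    rw [Nat.choose_eq_zero_of_lt this]
    simp)]
  have step : ∀ c ∈ Finset.range (n - k + 1),
      (n.choose c : ℝ) * p ^ c * (1 - p) ^ (n - c) * ((n - c).choose k : ℝ)
      = (1 - p) ^ k * (n.choose k : ℝ) *
        (p ^ c * (1 - p) ^ (n - k - c) * ((n - k).choose c : ℝ)) := by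
    intro c hc
    simp only [Finset.mem_range] at hc
    have hck : c + k ≤ n := by omega
    have hid : (n.choose c : ℝ) * ((n - c).choose k : ℝ)
        = (n.choose k : ℝ) * ((n - k).choose c : ℝ) := by
      exact_mod_cast congrArg (Nat.cast : ℕ → ℝ) (choose_swap n k c hck)
    have hpow : (1 - p) ^ (n - c) = (1 - p) ^ k * (1 - p) ^ (n - k - c) := by
      rw [← pow_add]; congr 1; omega
    rw [hpow]; linear_combination (p ^ c * (1 - p) ^ k * (1 - p) ^ (n - k - c)) * hid
  rw [Finset.sum_congr rfl step, ← Finset.mul_sum]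
  have hbin : ∑ c ∈ Finset.range (n - k + 1),
      p ^ c * (1 - p) ^ (n - k - c) * ((n - k).choose c : ℝ) = 1 := by
    have := add_pow p (1 - p) (n - k)
    simp only [add_sub_cancel, one_pow] at this
    rw [← this]
  rw [hbin, mul_one]
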